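/- Under Pr[f(x) = f(x')] = 0 for x, x' i.i.d. ∼ p, the ranking objective Rank(f) = E[1[f(x') ≤ f(x)](u(x) - u(x'))] is maximized by any f that is order-isomorphic to u, i.e., any f satisfying (f(x) ≤ f(x') ⟺ u(x) ≤ u(x')) for almost every pair (x, x'); in particular, f = u is a maximizer. -/

import Mathlib

open MeasureTheory

/-- Under the no-tie condition for `f`, any `f` order-isomorphic to `u`
(i.e., `f(x) ≤ f(x') ⟺ u(x) ≤ u(x')` for almost every pair) maximizes the
ranking objective `Rank(g) = E[1[g(x') ≤ g(x)](u(x) - u(x'))]`; in particular,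
`f = u` is a maximizer. -/
theorem order_isomorphic_maximizes_rank {X : Type*} [MeasurableSpace X]
    (p : Measure X) [IsProbabilityMeasure p] (f u : X → ℝ)
    (hf : Measurable f) (hu : Measurable u) (hui : Integrable u p)
    (hties : (p.prod p) {q : X × X | f q.1 = f q.2} = 0)
    (hiso : ∀ᵐ q : X × X ∂(p.prod p), (f q.1 ≤ f q.2 ↔ u q.1 ≤ u q.2)) :
    ∀ g : X → ℝ, Measurable g →
      (∫ q : X × X, (if g q.2 ≤ g q.1 then (1 : ℝ) else 0) * (u q.1 - u q.2)
          ∂(p.prod p))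
        ≤ ∫ q : X × X, (if f q.2 ≤ f q.1 then (1 : ℝ) else 0) * (u q.1 - u q.2)
            ∂(p.prod p) := by
  intro g hg
  set μ := p.prod p with hμ
  have hswap : MeasurePreserving (Prod.swap : X × X → X × X) μ μ :=
    Measure.measurePreserving_swap
  have hpfst : MeasurePreserving (Prod.fst : X × X → X) μ p :=
    ⟨measurable_fst, by simp [hμ]⟩
  have hpsnd : MeasurePreserving (Prod.snd : X × X → X) μ p :=
    ⟨measurable_snd, by simp [hμ]⟩
  have h1 : Integrable (fun q : X × X => u q.1) μ :=
    (hpfst.integrable_comp hui.aestronglyMeasurable).2 hui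
  have h2 : Integrable (fun q : X × X => u q.2) μ :=
    (hpsnd.integrable_comp hui.aestronglyMeasurable).2 hui
  have hbase : Integrable (fun q : X × X => u q.1 - u q.2) μ := h1.sub h2
  -- integrability of the rank integrand for any measurable score
  have key : ∀ v : X → ℝ, Measurable v →
      Integrable (fun q : X × X =>
        (if v q.2 ≤ v q.1 then (1 : ℝ) else 0) * (u q.1 - u q.2)) μ := by
    intro v hv
    refine hbase.bdd_mul (c := 1) ?_ (Filter.Eventually.of_forall ?_)
    · exact (Measurable.ite
        (measurableSet_le (hv.comp measurable_snd) (hv.comp measurable_fst))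
        measurable_const measurable_const).aestronglyMeasurable
    · intro q; split <;> simp
  have hIg := key g hg
  have hIf := key f hf
  have hIgs : Integrable (fun q : X × X =>
      (if g (Prod.swap q).2 ≤ g (Prod.swap q).1 then (1 : ℝ) else 0) *
        (u (Prod.swap q).1 - u (Prod.swap q).2)) μ :=
    (hswap.integrable_comp hIg.aestronglyMeasurable).2 hIg
  have hIfs : Integrable (fun q : X × X =>
      (if f (Prod.swap q).2 ≤ f (Prod.swap q).1 then (1 : ℝ) else 0) *
        (u (Prod.swap q).1 - u (Prod.swap q).2)) μ :=
    (hswap.integrable_comp hIf.aestronglyMeasurable).2 hIf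
  -- the integral is invariant under swapping coordinates
  have hint_swap : ∀ v : X → ℝ,
      (∫ q : X × X, (if v (Prod.swap q).2 ≤ v (Prod.swap q).1 then (1 : ℝ) else 0) *
          (u (Prod.swap q).1 - u (Prod.swap q).2) ∂μ)
        = ∫ q : X × X, (if v q.2 ≤ v q.1 then (1 : ℝ) else 0) * (u q.1 - u q.2) ∂μ := by
    intro v
    exact hswap.integral_comp MeasurableEquiv.prodComm.measurableEmbedding
      (fun q => (if v q.2 ≤ v q.1 then (1 : ℝ) else 0) * (u q.1 - u q.2))
  -- pointwise bound on the symmetrized integrand for any score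
  have hbnd : ∀ (v : X → ℝ) (q : X × X),
      (if v q.2 ≤ v q.1 then (1 : ℝ) else 0) * (u q.1 - u q.2)
        + (if v (Prod.swap q).2 ≤ v (Prod.swap q).1 then (1 : ℝ) else 0) *
          (u (Prod.swap q).1 - u (Prod.swap q).2)
        ≤ |u q.1 - u q.2| := by
    intro v q
    simp only [Prod.fst_swap, Prod.snd_swap]
    rcases abs_cases (u q.1 - u q.2) with ⟨h, h'⟩ | ⟨h, h'⟩ <;>
      split_ifs <;> linarith
  -- a.e. equality for f
  have heqf : ∀ᵐ q : X × X ∂μ,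
      (if f q.2 ≤ f q.1 then (1 : ℝ) else 0) * (u q.1 - u q.2)
        + (if f (Prod.swap q).2 ≤ f (Prod.swap q).1 then (1 : ℝ) else 0) *
          (u (Prod.swap q).1 - u (Prod.swap q).2)
        = |u q.1 - u q.2| := by
    filter_upwards [hiso, hswap.quasiMeasurePreserving.ae hiso] with q hq1 hq2
    simp only [Prod.fst_swap, Prod.snd_swap] at hq2 ⊢
    simp only [hq1, hq2]
    rcases abs_cases (u q.1 - u q.2) with ⟨h, h'⟩ | ⟨h, h'⟩ <;>
      split_ifs with h3 h4 <;> (try push_neg at *) <;> linarith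
  -- put everything together
  have hA : (2 : ℝ) * ∫ q : X × X, (if g q.2 ≤ g q.1 then (1 : ℝ) else 0) *
      (u q.1 - u q.2) ∂μ
      = ∫ q : X × X, ((if g q.2 ≤ g q.1 then (1 : ℝ) else 0) * (u q.1 - u q.2)
        + (if g (Prod.swap q).2 ≤ g (Prod.swap q).1 then (1 : ℝ) else 0) *
          (u (Prod.swap q).1 - u (Prod.swap q).2)) ∂μ := by
    rw [integral_add hIg hIgs, hint_swap g]; ring
  have hB : (2 : ℝ) * ∫ q : X × X, (if f q.2 ≤ f q.1 then (1 : ℝ) else 0) *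
      (u q.1 - u q.2) ∂μ
      = ∫ q : X × X, ((if f q.2 ≤ f q.1 then (1 : ℝ) else 0) * (u q.1 - u q.2)
        + (if f (Prod.swap q).2 ≤ f (Prod.swap q).1 then (1 : ℝ) else 0) *
          (u (Prod.swap q).1 - u (Prod.swap q).2)) ∂μ := by
    rw [integral_add hIf hIfs, hint_swap f]; ring
  have hle : (∫ q : X × X, ((if g q.2 ≤ g q.1 then (1 : ℝ) else 0) * (u q.1 - u q.2)
        + (if g (Prod.swap q).2 ≤ g (Prod.swap q).1 then (1 : ℝ) else 0) *
          (u (Prod.swap q).1 - u (Prod.swap q).2)) ∂μ)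
      ≤ ∫ q : X × X, ((if f q.2 ≤ f q.1 then (1 : ℝ) else 0) * (u q.1 - u q.2)
        + (if f (Prod.swap q).2 ≤ f (Prod.swap q).1 then (1 : ℝ) else 0) *
          (u (Prod.swap q).1 - u (Prod.swap q).2)) ∂μ := by
    refine integral_mono_ae (hIg.add hIgs) (hIf.add hIfs) ?_
    filter_upwards [heqf] with q hq
    calc _ ≤ |u q.1 - u q.2| := hbnd g q
      _ = _ := hq.symm
  linarith
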